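/- For all real t and all real x with |x| ≤ 1, cos(t·arcsin(x)) = ∑_{n≥0} (-1)^n · (∏_{i=0}^{n-1} (t² - (2i)²)) · x^{2n}/(2n)!. -/

import Mathlib

open Finset Real Topology Filter

noncomputable def catA (t : ℝ) (n : ℕ) : ℝ :=
  (-1) ^ n * (∏ i ∈ Finset.range n, (t ^ 2 - (2 * (i : ℝ)) ^ 2)) / Nat.factorial (2 * n)

lemma catA_zero (t : ℝ) : catA t 0 = 1 := by simp [catA]

lemma catA_rec (t : ℝ) (n : ℕ) :
    ((2*n+1 : ℝ) * (2*n+2)) * catA t (n+1) = ((2*(n:ℝ))^2 - t^2) * catA t n := by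
  have hf : (Nat.factorial (2*(n+1)) : ℝ) = (2*n+1) * (2*n+2) * Nat.factorial (2*n) := by
    have : 2*(n+1) = (2*n+1)+1 := by ring
    rw [this, Nat.factorial_succ, Nat.factorial_succ]
    push_cast; ring
  have hne : (Nat.factorial (2*n) : ℝ) ≠ 0 := by positivity
  unfold catA
  rw [prod_range_succ, hf]
  have h1 : (2*(n:ℝ)+1) ≠ 0 := by positivity
  have h2 : (2*(n:ℝ)+2) ≠ 0 := by positivity
  field_simp
  ring

lemma catA_abs_le_aux (t : ℝ) (n : ℕ) : |catA t n| ≤ Real.exp (t^2 * (1 - 1/(n+1))) := by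
  induction n with
  | zero => simp [catA_zero]
  | succ n ih =>
    have key := catA_rec t n
    have hd : (0:ℝ) < (2*n+1) * (2*n+2) := by positivity
    have hm : (0:ℝ) < ((n:ℝ)+1)*((n:ℝ)+2) := by positivity
    have habs : ((2*(n:ℝ)+1)*(2*(n:ℝ)+2)) * |catA t (n+1)| = |(2*(n:ℝ))^2 - t^2| * |catA t n| := by
      have h := congrArg abs key
      rwa [abs_mul ((2*(n:ℝ)+1)*(2*(n:ℝ)+2)), abs_mul ((2*(n:ℝ))^2 - t^2), abs_of_pos hd] at h
    have hdm : ((n:ℝ)+1)*((n:ℝ)+2) ≤ (2*n+1) * (2*n+2) := by nlinarith [Nat.cast_nonneg (α := ℝ) n]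
    have ht2 : t^2 ≤ ((2*n+1)*(2*n+2)) * (t^2/(((n:ℝ)+1)*((n:ℝ)+2))) := by
      rw [mul_div_assoc']
      rw [le_div_iff₀ hm]
      nlinarith [sq_nonneg t]
    have hb : |(2*(n:ℝ))^2 - t^2| ≤ ((2*n+1)*(2*n+2)) * (1 + t^2/(((n:ℝ)+1)*((n:ℝ)+2))) := by
      rw [abs_le]
      constructor
      · nlinarith [sq_nonneg (2*(n:ℝ)), sq_nonneg t]
      · nlinarith [sq_nonneg t, Nat.cast_nonneg (α := ℝ) n, sq_nonneg (2*(n:ℝ))]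
    have h1 : |catA t (n+1)| ≤ (1 + t^2/(((n:ℝ)+1)*((n:ℝ)+2))) * |catA t n| := by
      have h2 : ((2*(n:ℝ)+1)*(2*(n:ℝ)+2)) * |catA t (n+1)| ≤
          ((2*n+1)*(2*n+2)) * ((1 + t^2/(((n:ℝ)+1)*((n:ℝ)+2))) * |catA t n|) := by
        rw [habs, ← mul_assoc]
        exact mul_le_mul_of_nonneg_right hb (abs_nonneg _)
      exact le_of_mul_le_mul_left (by exact le_of_eq_of_le rfl h2) hd
    have h3 : (1 + t^2/(((n:ℝ)+1)*((n:ℝ)+2))) ≤ Real.exp (t^2/(((n:ℝ)+1)*((n:ℝ)+2))) := by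
      have := Real.add_one_le_exp (t^2/(((n:ℝ)+1)*((n:ℝ)+2)))
      linarith
    calc |catA t (n+1)| ≤ (1 + t^2/(((n:ℝ)+1)*((n:ℝ)+2))) * |catA t n| := h1
      _ ≤ Real.exp (t^2/(((n:ℝ)+1)*((n:ℝ)+2))) * Real.exp (t^2 * (1 - 1/(n+1))) := by
          apply mul_le_mul h3 ih (abs_nonneg _) (le_of_lt (Real.exp_pos _))
      _ = Real.exp (t^2 * (1 - 1/((n:ℝ)+1+1))) := by
          rw [← Real.exp_add]
          congr 1
          have h4 : ((n:ℝ)+1) ≠ 0 := by positivity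
          have h5 : ((n:ℝ)+2) ≠ 0 := by positivity
          field_simp
          ring
      _ = Real.exp (t^2 * (1 - 1/(((n+1:ℕ):ℝ)+1))) := by push_cast; ring_nf

lemma catA_abs_le (t : ℝ) (n : ℕ) : |catA t n| ≤ Real.exp (t^2) := by
  refine le_trans (catA_abs_le_aux t n) (Real.exp_le_exp.mpr ?_)
  have h1 : (0:ℝ) ≤ 1/((n:ℝ)+1) := by positivity
  nlinarith [sq_nonneg t]

lemma catA_key_step (t : ℝ) (n : ℕ) (hn1 : (1:ℝ) ≤ (n:ℝ)) (htn : t^2 ≤ (n:ℝ)^2) :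
    (catA t (n+1))^2 * ((n:ℝ)+1)^3 ≤ (catA t n)^2 * (n:ℝ)^3 := by
  have key := catA_rec t n
  set d : ℝ := (2*(n:ℝ)+1)*(2*(n:ℝ)+2) with hdDef
  set a : ℝ := catA t n
  set a' : ℝ := catA t (n+1)
  have hd : (0:ℝ) < d := by positivity
  have hA : ((2*(n:ℝ))^2 - t^2)^2 ≤ 16*(n:ℝ)^4 := by nlinarith
  have e1 : d^2 * (a'^2 * ((n:ℝ)+1)^3) = (((2*(n:ℝ))^2 - t^2)^2 * a^2) * ((n:ℝ)+1)^3 := by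
    have h2 : (d * a')^2 = (((2*(n:ℝ))^2 - t^2) * a)^2 := by rw [key]
    linear_combination ((n:ℝ)+1)^3 * h2
  have e2 : (((2*(n:ℝ))^2 - t^2)^2 * a^2) * ((n:ℝ)+1)^3 ≤ (16*(n:ℝ)^4) * a^2 * ((n:ℝ)+1)^3 := by
    have h3 := mul_le_mul_of_nonneg_right (mul_le_mul_of_nonneg_right hA (sq_nonneg a))
      (by positivity : (0:ℝ) ≤ ((n:ℝ)+1)^3)
    linarith
  have h4 : (16*(n:ℝ)^4) * ((n:ℝ)+1)^3 ≤ d^2 * (n:ℝ)^3 := by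
    have hid : d^2 * (n:ℝ)^3 - (16*(n:ℝ)^4) * ((n:ℝ)+1)^3 = 4*(n:ℝ)^3*((n:ℝ)+1)^2 := by
      rw [hdDef]; ring
    nlinarith [pow_nonneg (le_trans zero_le_one hn1) 3, sq_nonneg ((n:ℝ)+1),
      mul_nonneg (pow_nonneg (le_trans zero_le_one hn1) 3) (sq_nonneg ((n:ℝ)+1))]
  have e3 : (16*(n:ℝ)^4) * a^2 * ((n:ℝ)+1)^3 ≤ d^2 * (a^2 * (n:ℝ)^3) := by
    nlinarith [mul_le_mul_of_nonneg_right h4 (sq_nonneg a)]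
  have := le_trans (le_trans e1.le e2) e3
  exact le_of_mul_le_mul_left this (by positivity : (0:ℝ) < d^2)

set_option maxHeartbeats 1000000 in
lemma catA_summable_abs (t : ℝ) : Summable (fun n => |catA t n|) := by
  set N : ℕ := ⌈|t|⌉₊ + 1 with hN
  have htN : |t| ≤ N := le_trans (Nat.le_ceil _) (by exact_mod_cast Nat.le_succ _)
  have hNpos : 1 ≤ N := Nat.succ_le_succ (Nat.zero_le _)
  -- antitone from N on
  have anti : ∀ n : ℕ, N ≤ n → (catA t n)^2 * (n:ℝ)^3 ≤ (catA t N)^2 * (N:ℝ)^3 := by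
    intro n hn
    induction n, hn using Nat.le_induction with
    | base => exact le_refl _
    | succ n hn ih =>
      have hn1 : (1:ℝ) ≤ (n:ℝ) := by exact_mod_cast le_trans hNpos hn
      have htn : t^2 ≤ (n:ℝ)^2 := by
        have h1 : |t| ≤ (n:ℝ) := le_trans htN (by exact_mod_cast hn)
        nlinarith [abs_nonneg t, sq_abs t]
      rw [Nat.cast_succ]
      calc (catA t (n+1))^2 * ((n:ℝ)+1)^3 ≤ (catA t n)^2 * (n:ℝ)^3 :=
            catA_key_step t n hn1 htn
        _ ≤ _ := ih
  set B : ℝ := (catA t N)^2 * (N:ℝ)^3 with hB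
  have hBnn : 0 ≤ B := by positivity
  have hbound : ∀ n : ℕ, N ≤ n → |catA t n| ≤ Real.sqrt B / Real.sqrt ((n:ℝ)^3) := by
    intro n hn
    have hnpos : 0 < n := lt_of_lt_of_le hNpos hn
    have hn0 : (0:ℝ) < (n:ℝ)^3 := by positivity
    have h1 : (catA t n)^2 ≤ B / (n:ℝ)^3 := by
      rw [le_div_iff₀ hn0]; exact anti n hn
    calc |catA t n| = Real.sqrt ((catA t n)^2) := (Real.sqrt_sq_eq_abs _).symm
      _ ≤ Real.sqrt (B / (n:ℝ)^3) := Real.sqrt_le_sqrt h1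
      _ = Real.sqrt B / Real.sqrt ((n:ℝ)^3) := Real.sqrt_div hBnn _
  have hsum : Summable (fun n : ℕ => Real.sqrt B / Real.sqrt ((n:ℝ)^3)) := by
    have h3 : Summable (fun n : ℕ => 1 / (n:ℝ)^((3:ℝ)/2)) :=
      Real.summable_one_div_nat_rpow.mpr (by norm_num)
    have heq : ∀ n : ℕ, Real.sqrt B * (1 / (n:ℝ)^((3:ℝ)/2)) = Real.sqrt B / Real.sqrt ((n:ℝ)^3) := by
      intro n
      rw [Real.sqrt_eq_rpow ((n:ℝ)^3), ← Real.rpow_natCast (n:ℝ) 3,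
        ← Real.rpow_mul (Nat.cast_nonneg n)]
      norm_num
      ring
    exact (h3.mul_left (Real.sqrt B)).congr heq
  have hshift : Summable (fun n : ℕ => |catA t (n + N)|) :=
    Summable.of_nonneg_of_le (fun n => abs_nonneg _)
      (fun n => hbound (n+N) (Nat.le_add_left N n)) ((summable_nat_add_iff N).mpr hsum)
  exact (summable_nat_add_iff N).mp hshift

noncomputable def catF (t x : ℝ) : ℝ := ∑' n : ℕ, catA t n * x^(2*n)

noncomputable def catG (t x : ℝ) : ℝ := ∑' n : ℕ, ((2*n : ℕ) : ℝ) * catA t n * x^(2*n-1)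

noncomputable def catH (t x : ℝ) : ℝ :=
  ∑' n : ℕ, ((2*n : ℕ) : ℝ) * ((2*n-1 : ℕ) : ℝ) * catA t n * x^(2*n-2)

lemma summable_catF (t x : ℝ) (hx : |x| ≤ 1) : Summable (fun n => catA t n * x^(2*n)) := by
  apply Summable.of_abs
  apply Summable.of_nonneg_of_le (fun n => abs_nonneg _) ?_ (catA_summable_abs t)
  intro n
  rw [abs_mul, abs_pow]
  calc |catA t n| * |x|^(2*n) ≤ |catA t n| * 1 :=
        mul_le_mul_of_nonneg_left (pow_le_one₀ (abs_nonneg x) hx) (abs_nonneg _)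
    _ = |catA t n| := mul_one _

lemma bound_G (t : ℝ) {y r : ℝ} (hr0 : 0 < r) (hy : |y| ≤ r) (n : ℕ) :
    ‖((2*n : ℕ) : ℝ) * catA t n * y^(2*n-1)‖ ≤
      (2*Real.exp (t^2)/r) * ((n:ℝ)^1 * (r^2)^n) := by
  have hE1 : (1:ℝ) ≤ Real.exp (t^2) := by
    rw [show (1:ℝ) = Real.exp 0 by simp]; exact Real.exp_le_exp.mpr (sq_nonneg t)
  cases n with
  | zero => simp [hr0.le, div_nonneg, mul_nonneg, Real.exp_nonneg]
  | succ n =>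
    have he : 2*(n+1)-1 = 2*n+1 := by omega
    rw [Real.norm_eq_abs, abs_mul, abs_mul, abs_pow, he]
    have h1 : |((2*(n+1) : ℕ) : ℝ)| = 2*((n:ℝ)+1) := by
      rw [abs_of_nonneg (by positivity)]; push_cast; ring
    rw [h1]
    have h2 : (r^2)^(n+1) = (r^(2*n+1)) * r := by
      rw [← pow_mul]; ring
    have hrhs : (2*Real.exp (t^2)/r) * (((n+1:ℕ):ℝ)^1 * (r^2)^(n+1))
        = 2*((n:ℝ)+1) * Real.exp (t^2) * r^(2*n+1) := by
      rw [h2]; field_simp; push_cast; ring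
    rw [hrhs]
    have hyp : |y|^(2*n+1) ≤ r^(2*n+1) := pow_le_pow_left₀ (abs_nonneg _) hy _
    have haE := catA_abs_le t (n+1)
    calc 2*((n:ℝ)+1) * |catA t (n+1)| * |y|^(2*n+1)
        ≤ 2*((n:ℝ)+1) * Real.exp (t^2) * r^(2*n+1) := by
          apply mul_le_mul (mul_le_mul_of_nonneg_left haE (by positivity)) hyp
            (by positivity) (by positivity)

lemma bound_H (t : ℝ) {y r : ℝ} (hr0 : 0 < r) (hy : |y| ≤ r) (n : ℕ) :
    ‖((2*n : ℕ) : ℝ) * ((2*n-1 : ℕ) : ℝ) * catA t n * y^(2*n-2)‖ ≤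
      (4*Real.exp (t^2)/r^2) * ((n:ℝ)^2 * (r^2)^n) := by
  cases n with
  | zero => simp [hr0.le, div_nonneg, mul_nonneg, Real.exp_nonneg]
  | succ n =>
    have he : 2*(n+1)-2 = 2*n := by omega
    have he1 : ((2*(n+1)-1 : ℕ) : ℝ) = 2*(n:ℝ)+1 := by
      have : 2*(n+1)-1 = 2*n+1 := by omega
      rw [this]; push_cast; ring
    rw [Real.norm_eq_abs, abs_mul, abs_mul, abs_mul, abs_pow, he, he1]
    have h1 : |((2*(n+1) : ℕ) : ℝ)| = 2*((n:ℝ)+1) := by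
      rw [abs_of_nonneg (by positivity)]; push_cast; ring
    rw [h1, abs_of_nonneg (by positivity : (0:ℝ) ≤ 2*(n:ℝ)+1)]
    have h2 : (r^2)^(n+1) = (r^(2*n)) * r^2 := by
      rw [← pow_mul]; ring
    have hrhs : (4*Real.exp (t^2)/r^2) * (((n+1:ℕ):ℝ)^2 * (r^2)^(n+1))
        = (2*((n:ℝ)+1)) * (2*((n:ℝ)+1)) * Real.exp (t^2) * r^(2*n) := by
      rw [h2]; field_simp; push_cast; ring
    rw [hrhs]
    have hyp : |y|^(2*n) ≤ r^(2*n) := pow_le_pow_left₀ (abs_nonneg _) hy _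
    have haE := catA_abs_le t (n+1)
    calc 2*((n:ℝ)+1) * (2*(n:ℝ)+1) * |catA t (n+1)| * |y|^(2*n)
        ≤ (2*((n:ℝ)+1)) * (2*((n:ℝ)+1)) * Real.exp (t^2) * r^(2*n) := by
          apply mul_le_mul _ hyp (by positivity) (by positivity)
          apply mul_le_mul _ haE (abs_nonneg _) (by positivity)
          nlinarith [Nat.cast_nonneg (α := ℝ) n]

lemma summable_geom_aux (c r : ℝ) (k : ℕ) (hr0 : 0 < r) (hr1 : r < 1) :
    Summable (fun n : ℕ => c * ((n:ℝ)^k * (r^2)^n)) := by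
  apply Summable.mul_left
  have hr2 : ‖r^2‖ < 1 := by
    rw [Real.norm_eq_abs, abs_of_pos (by positivity)]
    nlinarith
  exact summable_pow_mul_geometric_of_norm_lt_one k hr2

lemma hasDerivAt_catF (t : ℝ) {x r : ℝ} (hr0 : 0 < r) (hr1 : r < 1) (hx : |x| < r) :
    HasDerivAt (fun y => catF t y) (catG t x) x := by
  have hmem : x ∈ Metric.ball (0:ℝ) r := by simpa [Real.dist_eq] using hx
  have h0mem : (0:ℝ) ∈ Metric.ball (0:ℝ) r := by simpa [Real.dist_eq] using hr0
  have H := hasDerivAt_tsum_of_isPreconnected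
    (u := fun n : ℕ => (2*Real.exp (t^2)/r) * ((n:ℝ)^1 * (r^2)^n))
    (g := fun (n : ℕ) (z : ℝ) => catA t n * z^(2*n))
    (g' := fun (n : ℕ) (z : ℝ) => ((2*n : ℕ) : ℝ) * catA t n * z^(2*n-1))
    (summable_geom_aux (2*Real.exp (t^2)/r) r 1 hr0 hr1)
    Metric.isOpen_ball (convex_ball (0:ℝ) r).isPreconnected
    (fun n y _ => by
      have h := (hasDerivAt_pow (2*n) y).const_mul (catA t n)
      exact h.congr_deriv (by push_cast; ring))
    (fun n y hy => bound_G t hr0 (by simpa [Real.dist_eq] using (Metric.mem_ball.mp hy).le) n)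
    h0mem (summable_catF t 0 (by norm_num)) hmem
  exact H

lemma hasDerivAt_catG (t : ℝ) {x r : ℝ} (hr0 : 0 < r) (hr1 : r < 1) (hx : |x| < r) :
    HasDerivAt (fun y => catG t y) (catH t x) x := by
  have hmem : x ∈ Metric.ball (0:ℝ) r := by simpa [Real.dist_eq] using hx
  have h0mem : (0:ℝ) ∈ Metric.ball (0:ℝ) r := by simpa [Real.dist_eq] using hr0
  have hzero : (fun n : ℕ => ((2*n : ℕ) : ℝ) * catA t n * (0:ℝ)^(2*n-1)) = fun _ => (0:ℝ) := by
    funext n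
    cases n with
    | zero => norm_num
    | succ n =>
      rw [zero_pow (by omega : 2*(n+1)-1 ≠ 0)]
      ring
  have H := hasDerivAt_tsum_of_isPreconnected
    (u := fun n : ℕ => (4*Real.exp (t^2)/r^2) * ((n:ℝ)^2 * (r^2)^n))
    (g := fun (n : ℕ) (z : ℝ) => ((2*n : ℕ) : ℝ) * catA t n * z^(2*n-1))
    (g' := fun (n : ℕ) (z : ℝ) => ((2*n : ℕ) : ℝ) * ((2*n-1 : ℕ) : ℝ) * catA t n * z^(2*n-2))
    (summable_geom_aux (4*Real.exp (t^2)/r^2) r 2 hr0 hr1)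
    Metric.isOpen_ball (convex_ball (0:ℝ) r).isPreconnected
    (fun n y _ => by
      have h := (hasDerivAt_pow (2*n-1) y).const_mul (((2*n : ℕ) : ℝ) * catA t n)
      have he : 2*n-1-1 = 2*n-2 := by omega
      rw [he] at h
      exact h.congr_deriv (by ring))
    (fun n y hy => bound_H t hr0 (by simpa [Real.dist_eq] using (Metric.mem_ball.mp hy).le) n)
    h0mem (by rw [hzero]; exact summable_zero) hmem
  exact H

lemma summable_catG (t : ℝ) {x : ℝ} (hx : |x| < 1) :
    Summable (fun n : ℕ => ((2*n : ℕ) : ℝ) * catA t n * x^(2*n-1)) := by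
  set r : ℝ := (1 + |x|)/2 with hr
  have hr0 : 0 < r := by positivity
  have hr1 : r < 1 := by rw [hr]; linarith
  have hxr : |x| ≤ r := by rw [hr]; cases abs_nonneg x |>.lt_or_eq <;> linarith [abs_nonneg x]
  apply Summable.of_norm
  exact Summable.of_nonneg_of_le (fun n => norm_nonneg _)
    (fun n => bound_G t hr0 hxr n) (summable_geom_aux _ r 1 hr0 hr1)

lemma summable_catH (t : ℝ) {x : ℝ} (hx : |x| < 1) :
    Summable (fun n : ℕ => ((2*n : ℕ) : ℝ) * ((2*n-1 : ℕ) : ℝ) * catA t n * x^(2*n-2)) := by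
  set r : ℝ := (1 + |x|)/2 with hr
  have hr0 : 0 < r := by positivity
  have hr1 : r < 1 := by rw [hr]; linarith
  have hxr : |x| ≤ r := by rw [hr]; linarith [abs_nonneg x]
  apply Summable.of_norm
  exact Summable.of_nonneg_of_le (fun n => norm_nonneg _)
    (fun n => bound_H t hr0 hxr n) (summable_geom_aux _ r 2 hr0 hr1)

lemma catODE (t : ℝ) {x : ℝ} (hx : |x| < 1) :
    (1 - x^2) * catH t x - x * catG t x + t^2 * catF t x = 0 := by
  have hF : HasSum (fun n => catA t n * x^(2*n)) (catF t x) :=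
    (summable_catF t x hx.le).hasSum
  have hG : HasSum (fun n : ℕ => ((2*n : ℕ) : ℝ) * catA t n * x^(2*n-1)) (catG t x) :=
    (summable_catG t hx).hasSum
  have hH : HasSum (fun n : ℕ => ((2*n : ℕ) : ℝ) * ((2*n-1 : ℕ) : ℝ) * catA t n * x^(2*n-2))
      (catH t x) := (summable_catH t hx).hasSum
  -- x * G as a sum of x^(2n) terms
  have h1 : HasSum (fun n : ℕ => (2*(n:ℝ)) * catA t n * x^(2*n)) (x * catG t x) := by
    have h := hG.mul_left x
    have e : (fun n : ℕ => x * (((2*n : ℕ) : ℝ) * catA t n * x^(2*n-1)))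
        = fun n : ℕ => (2*(n:ℝ)) * catA t n * x^(2*n) := by
      funext n
      cases n with
      | zero => push_cast; ring
      | succ n =>
        have : 2*(n+1)-1 = 2*n+1 := by omega
        rw [this, show 2*(n+1) = (2*n+1)+1 by omega, pow_succ]
        push_cast; ring
    rwa [e] at h
  -- x^2 * H as a sum of x^(2n) terms
  have h2 : HasSum (fun n : ℕ => (2*(n:ℝ)) * (2*(n:ℝ)-1) * catA t n * x^(2*n)) (x^2 * catH t x) := by
    have h := hH.mul_left (x^2)
    have e : (fun n : ℕ => x^2 * (((2*n : ℕ) : ℝ) * ((2*n-1 : ℕ) : ℝ) * catA t n * x^(2*n-2)))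
        = fun n : ℕ => (2*(n:ℝ)) * (2*(n:ℝ)-1) * catA t n * x^(2*n) := by
      funext n
      cases n with
      | zero => push_cast; ring
      | succ n =>
        have e1 : ((2*(n+1)-1 : ℕ) : ℝ) = 2*((n:ℝ)+1)-1 := by
          rw [show 2*(n+1)-1 = 2*n+1 by omega]; push_cast; ring
        have e2 : 2*(n+1)-2 = 2*n := by omega
        rw [e1, e2, show 2*(n+1) = 2*n+2 by omega, pow_add]
        push_cast; ring
    rwa [e] at h
  -- H as a shifted sum
  have h3 : HasSum (fun n : ℕ =>
      ((2*(n+1) : ℕ) : ℝ) * ((2*(n+1)-1 : ℕ) : ℝ) * catA t (n+1) * x^(2*(n+1)-2)) (catH t x) := by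
    refine (hasSum_nat_add_iff
      (f := fun n : ℕ => ((2*n : ℕ) : ℝ) * ((2*n-1 : ℕ) : ℝ) * catA t n * x^(2*n-2))
      1).mpr ?_
    simpa using hH
  have h4 : HasSum (fun n : ℕ => t^2 * (catA t n * x^(2*n))) (t^2 * catF t x) := hF.mul_left _
  -- combine
  have hcomb := ((h3.sub h2).sub h1).add h4
  have hz : (fun n : ℕ =>
      ((((2*(n+1) : ℕ) : ℝ) * ((2*(n+1)-1 : ℕ) : ℝ) * catA t (n+1) * x^(2*(n+1)-2)
        - (2*(n:ℝ)) * (2*(n:ℝ)-1) * catA t n * x^(2*n))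
        - (2*(n:ℝ)) * catA t n * x^(2*n)) + t^2 * (catA t n * x^(2*n)))
      = fun _ : ℕ => (0:ℝ) := by
    funext n
    have e1 : ((2*(n+1) : ℕ) : ℝ) = 2*(n:ℝ)+2 := by push_cast; ring
    have e2 : ((2*(n+1)-1 : ℕ) : ℝ) = 2*(n:ℝ)+1 := by
      rw [show 2*(n+1)-1 = 2*n+1 by omega]; push_cast; ring
    have e3 : 2*(n+1)-2 = 2*n := by omega
    rw [e1, e2, e3]
    linear_combination x^(2*n) * catA_rec t n
  rw [hz] at hcomb
  have := hcomb.unique hasSum_zero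
  linear_combination this

lemma catF_zero (t : ℝ) : catF t 0 = 1 := by
  unfold catF
  rw [tsum_eq_single 0 (fun n hn => by
    rw [zero_pow (by omega : 2*n ≠ 0), mul_zero])]
  simp [catA_zero]

lemma catG_zero (t : ℝ) : catG t 0 = 0 := by
  unfold catG
  have h : (fun n : ℕ => ((2*n : ℕ) : ℝ) * catA t n * (0:ℝ)^(2*n-1)) = fun _ => (0:ℝ) := by
    funext n
    cases n with
    | zero => norm_num
    | succ n => rw [zero_pow (by omega : 2*(n+1)-1 ≠ 0)]; ring
  rw [h, tsum_zero]

lemma catF_eq_interior (t : ℝ) (ht : t ≠ 0) {x : ℝ} (hx : |x| < 1) :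
    catF t x = Real.cos (t * Real.arcsin x) := by
  set I : Set ℝ := Set.Ioo (-(π/2)) (π/2) with hI
  have hsinI : ∀ θ ∈ I, |Real.sin θ| < 1 := by
    intro θ hθ
    have := Real.mapsTo_sin_Ioo hθ
    rw [abs_lt]
    exact ⟨this.1, this.2⟩
  set u : ℝ → ℝ := fun θ => catF t (Real.sin θ) with hu_def
  set v : ℝ → ℝ := fun θ => catG t (Real.sin θ) * Real.cos θ with hv_def
  have hu : ∀ θ ∈ I, HasDerivAt u (v θ) θ := by
    intro θ hθ
    have hs := hsinI θ hθ
    have hr0 : (0:ℝ) < (1 + |Real.sin θ|)/2 := by positivity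
    have hr1 : (1 + |Real.sin θ|)/2 < 1 := by linarith
    have hxr : |Real.sin θ| < (1 + |Real.sin θ|)/2 := by linarith [abs_nonneg (Real.sin θ)]
    exact (hasDerivAt_catF t hr0 hr1 hxr).comp θ (Real.hasDerivAt_sin θ)
  have hv : ∀ θ ∈ I, HasDerivAt v (-(t^2) * u θ) θ := by
    intro θ hθ
    have hs := hsinI θ hθ
    have hr0 : (0:ℝ) < (1 + |Real.sin θ|)/2 := by positivity
    have hr1 : (1 + |Real.sin θ|)/2 < 1 := by linarith
    have hxr : |Real.sin θ| < (1 + |Real.sin θ|)/2 := by linarith [abs_nonneg (Real.sin θ)]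
    have h2 := ((hasDerivAt_catG t hr0 hr1 hxr).comp θ (Real.hasDerivAt_sin θ)).mul
      (Real.hasDerivAt_cos θ)
    have hode := catODE t hs
    have hpyth : Real.cos θ^2 = 1 - Real.sin θ^2 := by
      have := Real.sin_sq_add_cos_sq θ; linarith
    refine h2.congr_deriv ?_
    simp only [hu_def, Function.comp_apply]
    linear_combination hode + catH t (Real.sin θ) * hpyth
  have hsin_t : ∀ θ : ℝ, HasDerivAt (fun θ => Real.sin (t*θ)) (Real.cos (t*θ) * t) θ := by
    intro θ
    have h := (Real.hasDerivAt_sin (t*θ)).comp θ ((hasDerivAt_id θ).const_mul t)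
    exact h.congr_deriv (by simp)
  have hcos_t : ∀ θ : ℝ, HasDerivAt (fun θ => Real.cos (t*θ)) (-Real.sin (t*θ) * t) θ := by
    intro θ
    have h := (Real.hasDerivAt_cos (t*θ)).comp θ ((hasDerivAt_id θ).const_mul t)
    exact h.congr_deriv (by simp)
  set p : ℝ → ℝ := fun θ => t * Real.sin (t*θ) * u θ + Real.cos (t*θ) * v θ with hp_def
  set q : ℝ → ℝ := fun θ => t * Real.cos (t*θ) * u θ - Real.sin (t*θ) * v θ with hq_def
  have hp : ∀ θ ∈ I, HasDerivAt p 0 θ := by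
    intro θ hθ
    have h := (((hsin_t θ).const_mul t).mul (hu θ hθ)).add ((hcos_t θ).mul (hv θ hθ))
    exact h.congr_deriv (by ring)
  have hq : ∀ θ ∈ I, HasDerivAt q 0 θ := by
    intro θ hθ
    have h := (((hcos_t θ).const_mul t).mul (hu θ hθ)).sub ((hsin_t θ).mul (hv θ hθ))
    exact h.congr_deriv (by ring)
  have h0I : (0:ℝ) ∈ I := by
    constructor
    · linarith [Real.pi_pos]
    · linarith [Real.pi_pos]
  have hconst : ∀ g : ℝ → ℝ, (∀ θ ∈ I, HasDerivAt g 0 θ) → ∀ θ ∈ I, g θ = g 0 := by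
    intro g hg θ hθ
    have h := (convex_Ioo _ _).norm_image_sub_le_of_norm_hasDerivWithin_le
      (fun y hy => (hg y hy).hasDerivWithinAt) (C := 0) (fun y hy => by simp) h0I hθ
    rw [zero_mul] at h
    have := norm_le_zero_iff.mp h
    rwa [sub_eq_zero] at this
  have hu0 : u 0 = 1 := by simp only [hu_def, Real.sin_zero]; exact catF_zero t
  have hv0 : v 0 = 0 := by
    simp only [hv_def, Real.sin_zero, Real.cos_zero, mul_one]
    exact catG_zero t
  set θ : ℝ := Real.arcsin x with hθ_def
  have hθI : θ ∈ I := by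
    constructor
    · exact Real.neg_pi_div_two_lt_arcsin.mpr (by linarith [abs_lt.mp hx])
    · exact Real.arcsin_lt_pi_div_two.mpr (by linarith [abs_lt.mp hx])
  have hp' : p θ = 0 := by
    rw [hconst p hp θ hθI, hp_def]
    simp [hu0, hv0]
  have hq' : q θ = t := by
    rw [hconst q hq θ hθI, hq_def]
    simp [hu0, hv0]
  have c1 : Real.sin (t*θ)^2 + Real.cos (t*θ)^2 = 1 := Real.sin_sq_add_cos_sq _
  have key : t * u θ = t * Real.cos (t*θ) := by
    simp only [hp_def, hq_def] at hp' hq'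
    linear_combination Real.cos (t*θ) * hq' + Real.sin (t*θ) * hp' - t * u θ * c1
  have huθ : u θ = Real.cos (t*θ) := mul_left_cancel₀ ht key
  have hsx : Real.sin θ = x := Real.sin_arcsin (by linarith [abs_lt.mp hx]) (by linarith [abs_lt.mp hx])
  calc catF t x = u θ := by rw [hu_def]; simp [hsx]
    _ = Real.cos (t*θ) := huθ

lemma catF_continuousOn (t : ℝ) : ContinuousOn (catF t) (Set.Icc (-1:ℝ) 1) := by
  apply continuousOn_tsum (u := fun n => |catA t n|)
    (fun i => (continuous_const.mul (continuous_pow _)).continuousOn)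
    (catA_summable_abs t)
  intro n x hx
  have hx1 : |x| ≤ 1 := abs_le.mpr ⟨hx.1, hx.2⟩
  rw [Real.norm_eq_abs, Pi.mul_apply, abs_mul, abs_pow]
  calc |catA t n| * |x|^(2*n) ≤ |catA t n| * 1 :=
        mul_le_mul_of_nonneg_left (pow_le_one₀ (abs_nonneg x) hx1) (abs_nonneg _)
    _ = |catA t n| := mul_one _

lemma catF_eq_one (t : ℝ) (ht : t ≠ 0) : catF t 1 = Real.cos (t * Real.arcsin 1) := by
  have hne : (𝓝[Set.Ioo (0:ℝ) 1] (1:ℝ)).NeBot := by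
    apply mem_closure_iff_nhdsWithin_neBot.mp
    rw [closure_Ioo (by norm_num : (0:ℝ) ≠ 1)]
    exact ⟨by norm_num, le_refl 1⟩
  have hsub : Set.Ioo (0:ℝ) 1 ⊆ Set.Icc (-1:ℝ) 1 := fun y hy => ⟨by linarith [hy.1], hy.2.le⟩
  have h1 : Filter.Tendsto (catF t) (𝓝[Set.Ioo (0:ℝ) 1] 1) (𝓝 (catF t 1)) :=
    ((catF_continuousOn t).continuousWithinAt (Set.mem_Icc.mpr ⟨by norm_num, le_refl 1⟩)).mono hsub
  have h2 : Filter.Tendsto (fun y => Real.cos (t * Real.arcsin y)) (𝓝[Set.Ioo (0:ℝ) 1] 1)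
      (𝓝 (Real.cos (t * Real.arcsin 1))) :=
    ((Real.continuous_cos.comp (continuous_const.mul Real.continuous_arcsin)).tendsto 1).mono_left
      nhdsWithin_le_nhds
  have hEq : (catF t) =ᶠ[𝓝[Set.Ioo (0:ℝ) 1] 1] (fun y => Real.cos (t * Real.arcsin y)) := by
    filter_upwards [eventually_mem_nhdsWithin] with y hy
    exact catF_eq_interior t ht (abs_lt.mpr ⟨by linarith [hy.1], hy.2⟩)
  exact tendsto_nhds_unique (h1.congr' hEq) h2

lemma catF_eq_boundary (t : ℝ) (ht : t ≠ 0) {x : ℝ} (hx : |x| = 1) :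
    catF t x = Real.cos (t * Real.arcsin x) := by
  rcases abs_eq (by norm_num : (0:ℝ) ≤ 1) |>.mp hx with h | h
  · rw [h]; exact catF_eq_one t ht
  · rw [h]
    have hFsym : catF t (-1) = catF t 1 := by
      unfold catF
      congr 1
      funext n
      rw [show ((-1:ℝ))^(2*n) = 1 by rw [pow_mul]; norm_num,
        show ((1:ℝ))^(2*n) = 1 by norm_num]
    rw [hFsym, catF_eq_one t ht, Real.arcsin_neg, Real.arcsin_one, mul_neg, Real.cos_neg]

theorem cos_t_arcsin_series (t x : ℝ) (hx : |x| ≤ 1) :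
    HasSum (fun n : ℕ =>
      (-1) ^ n * (∏ i ∈ Finset.range n, (t ^ 2 - (2 * (i : ℝ)) ^ 2))
        * x ^ (2 * n) / Nat.factorial (2 * n))
      (Real.cos (t * Real.arcsin x)) := by
  by_cases ht : t = 0
  · subst ht
    have h := hasSum_single (f := fun n : ℕ =>
      (-1) ^ n * (∏ i ∈ Finset.range n, ((0:ℝ) ^ 2 - (2 * (i : ℝ)) ^ 2))
        * x ^ (2 * n) / Nat.factorial (2 * n)) 0 (fun n hn => ?_)
    · simpa using h
    · have h0 : (0:ℕ) ∈ Finset.range n := Finset.mem_range.mpr (Nat.pos_of_ne_zero hn)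
      show ((-1:ℝ)) ^ n * (∏ i ∈ Finset.range n, ((0:ℝ) ^ 2 - (2 * (i : ℝ)) ^ 2))
        * x ^ (2 * n) / Nat.factorial (2 * n) = 0
      rw [Finset.prod_eq_zero h0 (by norm_num)]
      ring
  · have hfun : (fun n : ℕ =>
        (-1) ^ n * (∏ i ∈ Finset.range n, (t ^ 2 - (2 * (i : ℝ)) ^ 2))
          * x ^ (2 * n) / Nat.factorial (2 * n)) = fun n => catA t n * x^(2*n) := by
      funext n; unfold catA; ring
    rw [hfun]
    have hs : HasSum (fun n => catA t n * x^(2*n)) (catF t x) := (summable_catF t x hx).hasSum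
    have heq : catF t x = Real.cos (t * Real.arcsin x) := by
      rcases lt_or_eq_of_le hx with h | h
      · exact catF_eq_interior t ht h
      · exact catF_eq_boundary t ht h
    rwa [heq] at hs
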